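/- arXiv:0812.0143 — 2 statements merged into one kernel-verified Lean document; each statement's English description precedes it below -/
import Mathlib

section
/- For all n ≥ 2, a permutation π of {1,…,n} satisfies ssc(π) = n−1 if and only if π ends with the suffix n,1 (that is, π_{n−1} = n and π_n = 1). -/
/-- The largest letter of a word (`0` for the empty word). -/
def listMax (l : List ℕ) : ℕ := l.foldr max 0

lemma listMax_mem {l : List ℕ} (h : l ≠ []) : listMax l ∈ l := by
  induction l with
  | nil => simp at h
  | cons a t ih =>
    rcases eq_or_ne t [] with rfl | ht
    · simp [listMax]
    · have ht' := ih ht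
      have hcons : listMax (a :: t) = max a (listMax t) := rfl
      rcases le_total a (listMax t) with hle | hle
      · rw [hcons, max_eq_right hle]; exact List.mem_cons_of_mem _ ht'
      · rw [hcons, max_eq_left hle]; exact List.mem_cons_self

/-- The stack-sorting operator `S`: `S` of the empty word is the empty word, and
if `π` is nonempty, writing `π = L·m·R` where `m` is the greatest letter of `π`,
then `S(π) = S(L)·S(R)·m`. -/
def stackSort : List ℕ → List ℕ
  | [] => []
  | x :: xs =>
    stackSort ((x :: xs).take ((x :: xs).idxOf (listMax (x :: xs)))) ++
      stackSort ((x :: xs).drop ((x :: xs).idxOf (listMax (x :: xs)) + 1)) ++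
      [listMax (x :: xs)]
termination_by l => l.length
decreasing_by
  · have hm : listMax (x :: xs) ∈ x :: xs := listMax_mem (by simp)
    have hi : (x :: xs).idxOf (listMax (x :: xs)) < (x :: xs).length :=
      List.idxOf_lt_length_iff.mpr hm
    simp only [List.length_take, List.length_cons] at *
    omega
  · simp only [List.length_drop, List.length_cons]
    omega

/-- `π` is a permutation of `{1, …, n}`, viewed as a word containing each of
`1, …, n` exactly once. -/
def IsPermWord (n : ℕ) (π : List ℕ) : Prop := π.Perm (List.range' 1 n)

/-- The stack-sorting complexity of `π`: the least `k ≥ 0` such that `S^k(π)`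
is the identity word `1, 2, …, n` (where `n` is the length of `π`). -/
noncomputable def ssc (π : List ℕ) : ℕ :=
  sInf {k : ℕ | stackSort^[k] π = List.range' 1 π.length}

lemma listMax_le {l : List ℕ} {x : ℕ} (h : x ∈ l) : x ≤ listMax l := by
  induction l with
  | nil => simp at h
  | cons a t ih =>
    have hc : listMax (a :: t) = max a (listMax t) := rfl
    rw [hc]
    rcases List.mem_cons.mp h with rfl | h
    · exact le_max_left _ _
    · exact le_trans (ih h) (le_max_right _ _)

lemma listMax_eq {l : List ℕ} {m : ℕ} (hm : m ∈ l) (hb : ∀ x ∈ l, x ≤ m) :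
    listMax l = m :=
  le_antisymm (hb _ (listMax_mem (by rintro rfl; simp at hm))) (listMax_le hm)

lemma stackSort_nil : stackSort [] = [] := by rw [stackSort]

lemma stackSort_unfold {l : List ℕ} (h : l ≠ []) :
    stackSort l = stackSort (l.take (l.idxOf (listMax l))) ++
      stackSort (l.drop (l.idxOf (listMax l) + 1)) ++ [listMax l] := by
  cases l with
  | nil => exact absurd rfl h
  | cons x xs => rw [stackSort]

lemma stackSort_ends {l : List ℕ} (h : l ≠ []) :
    ∃ t, stackSort l = t ++ [listMax l] :=
  ⟨_, stackSort_unfold h⟩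

lemma stackSort_split {L R : List ℕ} {m : ℕ} (hL : ∀ x ∈ L, x < m) (hR : ∀ x ∈ R, x ≤ m) :
    stackSort (L ++ m :: R) = stackSort L ++ stackSort R ++ [m] := by
  have hmax : listMax (L ++ m :: R) = m := by
    apply listMax_eq
    · exact List.mem_append_right _ (List.mem_cons_self)
    · intro x hx
      rcases List.mem_append.mp hx with hx | hx
      · exact le_of_lt (hL x hx)
      · rcases List.mem_cons.mp hx with rfl | hx
        · exact le_rfl
        · exact hR x hx
  have hnm : m ∉ L := fun h => lt_irrefl m (hL m h)
  have hidx : (L ++ m :: R).idxOf m = L.length := by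
    rw [List.idxOf_append_of_notMem hnm, List.idxOf_cons_self]
    omega
  have ht : (L ++ m :: R).take L.length = L := List.take_left (l₁ := L) (l₂ := m :: R)
  have hd : (L ++ m :: R).drop (L.length + 1) = R := by
    have h1 : L ++ m :: R = (L ++ [m]) ++ R := by simp
    have h2 := List.drop_left (l₁ := L ++ [m]) (l₂ := R)
    rw [h1]
    simpa using h2
  rw [stackSort_unfold (by simp), hmax, hidx, ht, hd]

lemma stackSort_perm (l : List ℕ) : (stackSort l).Perm l := by
  suffices h : ∀ (n : ℕ) (l : List ℕ), l.length = n → (stackSort l).Perm l from h _ l rfl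
  intro n
  induction n using Nat.strong_induction_on with
  | _ n ih =>
    intro l hlen
    cases l with
    | nil => simp [stackSort_nil]
    | cons x xs =>
      have hne : (x :: xs) ≠ [] := by simp
      have hm : listMax (x :: xs) ∈ x :: xs := listMax_mem hne
      have hi : (x :: xs).idxOf (listMax (x :: xs)) < (x :: xs).length :=
        List.idxOf_lt_length_iff.mpr hm
      set i := (x :: xs).idxOf (listMax (x :: xs)) with hidef
      have hget : (x :: xs)[i] = listMax (x :: xs) := List.getElem_idxOf hi
      have hlt1 : ((x :: xs).take i).length < n := by
        rw [← hlen]; simp only [List.length_take]; simp only [List.length_cons] at hi ⊢; omega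
      have hlt2 : ((x :: xs).drop (i + 1)).length < n := by
        rw [← hlen]; simp only [List.length_drop]; simp only [List.length_cons] at hi ⊢; omega
      have h1 := ih _ hlt1 ((x :: xs).take i) rfl
      have h2 := ih _ hlt2 ((x :: xs).drop (i + 1)) rfl
      rw [stackSort_unfold hne, ← hidef]
      have p1 : (stackSort ((x :: xs).take i) ++ stackSort ((x :: xs).drop (i + 1)) ++
          [listMax (x :: xs)]).Perm
          ((x :: xs).take i ++ (x :: xs).drop (i + 1) ++ [listMax (x :: xs)]) :=
        (h1.append h2).append (List.Perm.refl _)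
      have p2 : ((x :: xs).take i ++ (x :: xs).drop (i + 1) ++ [listMax (x :: xs)]).Perm
          ((x :: xs).take i ++ (listMax (x :: xs) :: (x :: xs).drop (i + 1))) := by
        rw [List.append_assoc]
        exact (List.Perm.refl _).append (List.perm_append_singleton _ _)
      have p3 : (x :: xs).take i ++ (listMax (x :: xs) :: (x :: xs).drop (i + 1)) = x :: xs := by
        rw [← hget, List.getElem_cons_drop, List.take_append_drop]
      have p4 : (List.take i (x :: xs) ++ (listMax (x :: xs) :: List.drop (i + 1) (x :: xs))).Perm
          (x :: xs) := by rw [p3]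
      exact (p1.trans p2).trans p4

lemma stackSort_concat {l : List ℕ} {m : ℕ} (h : ∀ x ∈ l, x < m) :
    stackSort (l ++ [m]) = stackSort l ++ [m] := by
  have := stackSort_split (R := []) h (by simp)
  simpa [stackSort_nil] using this

lemma stackSort_iterate_perm (k : ℕ) (l : List ℕ) : (stackSort^[k] l).Perm l := by
  induction k with
  | zero => simp
  | succ k ih =>
    rw [Function.iterate_succ_apply']
    exact (stackSort_perm _).trans ih

lemma stackSort_iterate_concat {l : List ℕ} {m : ℕ} (h : ∀ x ∈ l, x < m) (k : ℕ) :
    stackSort^[k] (l ++ [m]) = stackSort^[k] l ++ [m] := by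
  induction k with
  | zero => simp
  | succ k ih =>
    rw [Function.iterate_succ_apply', Function.iterate_succ_apply', ih]
    exact stackSort_concat fun x hx => h x ((stackSort_iterate_perm k l).mem_iff.mp hx)

lemma range'_concat (n : ℕ) : List.range' 1 n ++ [n + 1] = List.range' 1 (n + 1) := by
  have := List.range'_append (s := 1) (m := n) (n := 1) (step := 1)
  simpa [Nat.add_comm] using this

lemma sorts_in_pred : ∀ (n : ℕ) (l : List ℕ), l.Perm (List.range' 1 n) →
    stackSort^[n - 1] l = List.range' 1 n := by
  intro n
  induction n with
  | zero =>
    intro l h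
    have : l = [] := List.length_eq_zero_iff.mp (by simpa using h.length_eq)
    simp [this]
  | succ n ih =>
    intro l h
    rcases Nat.eq_zero_or_pos n with rfl | hn
    · have : l = [1] := List.Perm.eq_singleton (by simpa using h)
      simp [this]
    · have hmem : n + 1 ∈ l := h.mem_iff.mpr (by rw [← range'_concat]; simp)
      obtain ⟨L, R, rfl⟩ := List.append_of_mem hmem
      have hnd : (L ++ (n+1) :: R).Nodup := h.nodup_iff.mpr (List.nodup_range' (s := 1) (n := n+1))
      have hnL : (n+1) ∉ L := fun hx =>
        (List.disjoint_of_nodup_append hnd) hx (List.mem_cons_self)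
      have hbounds : ∀ x ∈ L ++ (n+1) :: R, x ≤ n + 1 := by
        intro x hx
        have := List.mem_range'_1.mp (h.mem_iff.mp hx)
        omega
      have hL : ∀ x ∈ L, x < n + 1 := by
        intro x hx
        have h1 := hbounds x (List.mem_append_left _ hx)
        rcases lt_or_eq_of_le h1 with h2 | rfl
        · exact h2
        · exact absurd hx hnL
      have hR : ∀ x ∈ R, x ≤ n + 1 := fun x hx =>
        hbounds x (List.mem_append_right _ (List.mem_cons_of_mem _ hx))
      have hsplit := stackSort_split hL hR
      have hperm : (stackSort L ++ stackSort R).Perm (List.range' 1 n) := by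
        have h1 : (L ++ (n+1) :: R).Perm ((n+1) :: (L ++ R)) := List.perm_middle
        have h3 : (List.range' 1 n ++ [n+1]).Perm ((n+1) :: List.range' 1 n) :=
          List.perm_append_singleton _ _
        have h4 : (L ++ R).Perm (List.range' 1 n) :=
          (h1.symm.trans (h.trans (by rw [← range'_concat]; exact h3))).cons_inv
        exact ((stackSort_perm L).append (stackSort_perm R)).trans h4
      have hlt : ∀ x ∈ stackSort L ++ stackSort R, x < n + 1 := by
        intro x hx
        have := List.mem_range'_1.mp (hperm.mem_iff.mp hx)
        omega
      have hs : n + 1 - 1 = (n - 1) + 1 := by omega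
      rw [hs, Function.iterate_succ_apply, hsplit,
        stackSort_iterate_concat hlt, ih _ hperm, range'_concat]

lemma append_cons_inj {a : ℕ} : ∀ {L w R R' : List ℕ}, a ∉ L → a ∉ w →
    L ++ a :: R = w ++ a :: R' → L = w ∧ R = R' := by
  intro L
  induction L with
  | nil =>
    intro w R R' _ hw h
    cases w with
    | nil => simpa using h
    | cons c w' =>
      simp only [List.nil_append, List.cons_append, List.cons.injEq] at h
      exact absurd (h.1 ▸ (List.mem_cons_self (a := c) (l := w'))) (by simpa [h.1] using hw)
  | cons b L' ih =>
    intro w R R' hL hw h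
    cases w with
    | nil =>
      simp only [List.cons_append, List.nil_append, List.cons.injEq] at h
      exact absurd (h.1 ▸ (List.mem_cons_self (a := b) (l := L'))) (by simpa [h.1] using hL)
    | cons c w' =>
      simp only [List.cons_append, List.cons.injEq] at h
      obtain ⟨rfl, h2⟩ := h
      obtain ⟨h3, h4⟩ := ih (fun hx => hL (List.mem_cons_of_mem _ hx))
        (fun hx => hw (List.mem_cons_of_mem _ hx)) h2
      exact ⟨by rw [h3], h4⟩

lemma stackSort_singleton (a : ℕ) : stackSort [a] = [a] := by
  have := stackSort_split (L := []) (R := []) (m := a) (by simp) (by simp)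
  simpa [stackSort_nil] using this

lemma main_equiv (n : ℕ) (hn2 : 2 ≤ n) : ∀ (π : List ℕ), π.Perm (List.range' 1 n) →
    (stackSort^[n - 2] π ≠ List.range' 1 n ↔ ∃ w, π = w ++ [n, 1]) := by
  induction n, hn2 using Nat.le_induction with
  | base =>
    intro π hπ
    have hlen : π.length = 2 := by simpa using hπ.length_eq
    have h12 : List.range' 1 2 = [1, 2] := by decide
    match π, hlen with
    | [a, b], _ =>
      have h1 : 1 ∈ [a, b] := hπ.mem_iff.mpr (by rw [h12]; simp)
      have h2 : 2 ∈ [a, b] := hπ.mem_iff.mpr (by rw [h12]; simp)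
      simp only [List.mem_cons, List.mem_singleton, List.not_mem_nil, or_false] at h1 h2
      simp only [Nat.sub_self, Function.iterate_zero, id_eq, h12]
      constructor
      · intro hne
        refine ⟨[], ?_⟩
        rcases h1 with rfl | rfl
        · rcases h2 with h2 | rfl
          · omega
          · exact absurd rfl hne
        · rcases h2 with rfl | h2
          · rfl
          · omega
      · rintro ⟨w, hw⟩
        cases w with
        | nil =>
          rw [hw]
          simp
        | cons c w' =>
          have hh := congrArg List.length hw
          simp only [List.length_cons, List.length_append, List.length_nil] at hh
          omega
  | succ n hn ih =>
    intro π hπ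
    have hmem : n + 1 ∈ π := hπ.mem_iff.mpr (by rw [← range'_concat]; simp)
    obtain ⟨L, R, rfl⟩ := List.append_of_mem hmem
    have hnd : (L ++ (n+1) :: R).Nodup := hπ.nodup_iff.mpr (List.nodup_range' (s := 1) (n := n+1))
    have hnL : (n+1) ∉ L := fun hx =>
      (List.disjoint_of_nodup_append hnd) hx (List.mem_cons_self)
    have hbounds : ∀ x ∈ L ++ (n+1) :: R, 1 ≤ x ∧ x ≤ n + 1 := by
      intro x hx
      have := List.mem_range'_1.mp (hπ.mem_iff.mp hx)
      omega
    have hL : ∀ x ∈ L, x < n + 1 := by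
      intro x hx
      have h1 := (hbounds x (List.mem_append_left _ hx)).2
      rcases lt_or_eq_of_le h1 with h2 | rfl
      · exact h2
      · exact absurd hx hnL
    have hR : ∀ x ∈ R, x ≤ n + 1 := fun x hx =>
      (hbounds x (List.mem_append_right _ (List.mem_cons_of_mem _ hx))).2
    have hsplit := stackSort_split hL hR
    have hLR : (L ++ R).Perm (List.range' 1 n) := by
      have h1 : (L ++ (n+1) :: R).Perm ((n+1) :: (L ++ R)) := List.perm_middle
      have h3 : (List.range' 1 n ++ [n+1]).Perm ((n+1) :: List.range' 1 n) :=
        List.perm_append_singleton _ _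
      exact (h1.symm.trans (hπ.trans (by rw [← range'_concat]; exact h3))).cons_inv
    have hτperm : (stackSort L ++ stackSort R).Perm (List.range' 1 n) :=
      ((stackSort_perm L).append (stackSort_perm R)).trans hLR
    have hτlt : ∀ x ∈ stackSort L ++ stackSort R, x < n + 1 := by
      intro x hx
      have := List.mem_range'_1.mp (hτperm.mem_iff.mp hx)
      omega
    have hiter : stackSort^[n + 1 - 2] (L ++ (n+1) :: R) =
        stackSort^[n - 2] (stackSort L ++ stackSort R) ++ [n + 1] := by
      have h1 : n + 1 - 2 = (n - 2) + 1 := by omega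
      rw [h1, Function.iterate_succ_apply, hsplit, stackSort_iterate_concat hτlt]
    rw [hiter, ← range'_concat, ne_eq, List.append_left_inj, ← ne_eq,
      ih (stackSort L ++ stackSort R) hτperm]
    constructor
    · rintro ⟨w, hw⟩
      have hR1 : R = [1] := by
        cases hRe : R with
        | nil =>
          exfalso
          subst hRe
          have hLperm : L.Perm (List.range' 1 n) := by simpa using hLR
          have hLne : L ≠ [] := by
            intro h0
            have := hLperm.length_eq
            rw [h0] at this
            simp at this
            omega
          have hmaxL : listMax L = n := by
            apply listMax_eq
            · exact hLperm.mem_iff.mpr (List.mem_range'_1.mpr ⟨by omega, by omega⟩)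
            · intro x hx
              have := List.mem_range'_1.mp (hLperm.mem_iff.mp hx)
              omega
          obtain ⟨t, ht⟩ := stackSort_ends hLne
          rw [stackSort_nil, List.append_nil, ht, hmaxL] at hw
          have e1 : (t ++ [n]).getLast? = some n := List.getLast?_concat
          have e2 : (w ++ [n, 1]).getLast? = some 1 := by
            have : w ++ [n, 1] = (w ++ [n]) ++ [1] := by simp
            rw [this]
            exact List.getLast?_concat
          rw [hw, e2] at e1
          have : n = 1 := by simpa using e1.symm
          omega
        | cons a R' =>
          have hRne : R ≠ [] := by rw [hRe]; simp
          obtain ⟨t, ht⟩ := stackSort_ends hRne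
          have hmaxR : listMax R = 1 := by
            rw [ht] at hw
            have e1 : ((stackSort L ++ t) ++ [listMax R]).getLast? = some (listMax R) :=
              List.getLast?_concat
            have e0 : stackSort L ++ (t ++ [listMax R]) = (stackSort L ++ t) ++ [listMax R] := by
              simp
            rw [← e0, hw] at e1
            have e2 : (w ++ [n, 1]).getLast? = some 1 := by
              have e3 : w ++ [n, 1] = (w ++ [n]) ++ [1] := by simp
              rw [e3]
              exact List.getLast?_concat
            rw [e2] at e1
            simpa using e1.symm
          have hall1 : ∀ x ∈ R, x = 1 := by
            intro x hx
            have hle : x ≤ 1 := hmaxR ▸ listMax_le hx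
            have hge := (hbounds x (List.mem_append_right _ (List.mem_cons_of_mem _ hx))).1
            omega
          have hRnd : R.Nodup := (List.Nodup.of_append_right hnd).of_cons
          subst hRe
          have ha1 : a = 1 := hall1 a (List.mem_cons_self)
          cases R' with
          | nil => rw [ha1]
          | cons b t' =>
            exfalso
            have hb1 : b = 1 := hall1 b (List.mem_cons_of_mem _ (List.mem_cons_self))
            have : a ≠ b := by
              have := List.nodup_cons.mp hRnd
              intro h0
              exact this.1 (h0 ▸ List.mem_cons_self)
            omega
      refine ⟨L, ?_⟩
      rw [hR1]
    · rintro ⟨w, hw⟩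
      have hnw : (n+1) ∉ w := by
        intro hx
        rw [hw] at hnd
        exact (List.disjoint_of_nodup_append hnd) hx (by simp)
      have hw2 : L ++ (n+1) :: R = w ++ (n+1) :: [1] := by simpa using hw
      obtain ⟨rfl, hR1⟩ := append_cons_inj hnL hnw hw2
      subst hR1
      have hLperm : L.Perm (List.range' 2 (n - 1)) := by
        have h0 : List.range' 1 n = 1 :: List.range' 2 (n - 1) := by
          have e : n = (n - 1) + 1 := by omega
          conv_lhs => rw [e, List.range'_succ]
        have h1 : (1 :: L).Perm (1 :: List.range' 2 (n - 1)) :=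
          ((List.perm_append_singleton 1 L).symm.trans hLR).trans (h0 ▸ List.Perm.refl _)
        exact h1.cons_inv
      have hLne : L ≠ [] := by
        intro h0
        have := hLperm.length_eq
        rw [h0] at this
        simp at this
        omega
      have hmaxL : listMax L = n := by
        apply listMax_eq
        · exact hLperm.mem_iff.mpr (List.mem_range'_1.mpr ⟨by omega, by omega⟩)
        · intro x hx
          have := List.mem_range'_1.mp (hLperm.mem_iff.mp hx)
          omega
      obtain ⟨t, ht⟩ := stackSort_ends hLne
      refine ⟨t, ?_⟩
      rw [stackSort_singleton, ht, hmaxL]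
      simp


/-- For all `n ≥ 2`, a permutation `π` of `{1,…,n}` satisfies `ssc(π) = n−1`
if and only if `π` ends with the suffix `n, 1`. -/
theorem ssc_eq_n_sub_one_iff (n : ℕ) (hn : 2 ≤ n) (π : List ℕ) (hπ : IsPermWord n π) :
    ssc π = n - 1 ↔ ∃ w : List ℕ, π = w ++ [n, 1] := by
  have hπ' : π.Perm (List.range' 1 n) := hπ
  have hlen : π.length = n := by simpa using hπ'.length_eq
  have hssc : ssc π = sInf {k : ℕ | stackSort^[k] π = List.range' 1 n} := by
    unfold ssc
    rw [hlen]
  set S : Set ℕ := {k : ℕ | stackSort^[k] π = List.range' 1 n} with hS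
  have hsorted : n - 1 ∈ S := sorts_in_pred n π hπ'
  have hid : stackSort (List.range' 1 n) = List.range' 1 n := by
    clear hsorted hssc hS hlen hπ hπ' hn
    induction n with
    | zero => simp [stackSort_nil]
    | succ n ih =>
      rw [← range'_concat, stackSort_concat, ih]
      intro x hx
      have := List.mem_range'_1.mp hx
      omega
  have hmono : ∀ k ∈ S, ∀ j, k ≤ j → j ∈ S := by
    intro k hk j hj
    induction j, hj using Nat.le_induction with
    | base => exact hk
    | succ j _ ihj =>
      have : stackSort^[j + 1] π = stackSort (stackSort^[j] π) :=
        Function.iterate_succ_apply' _ _ _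
      rw [Set.mem_setOf_eq, this, ihj, hid]
  rw [hssc, ← main_equiv n hn π hπ']
  constructor
  · intro heq hcon
    have : n - 2 ∈ S := hcon
    have := Nat.sInf_le this
    omega
  · intro hne
    have h1 : sInf S ≤ n - 1 := Nat.sInf_le hsorted
    have h2 : sInf S ∈ S := Nat.sInf_mem ⟨n - 1, hsorted⟩
    by_contra hcon
    have h3 : sInf S ≤ n - 2 := by omega
    exact hne (hmono _ h2 _ h3)
end

section
/- For all n ≥ 2, the number of permutations π of {1,…,n} with ssc(π) = n−1 equals (n−2)!. -/
namespace SSCProof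
open scoped List

lemma le_listMax {l : List ℕ} {x : ℕ} (hx : x ∈ l) : x ≤ listMax l := by
  induction l with
  | nil => simp at hx
  | cons a t ih =>
    rcases List.mem_cons.mp hx with rfl | hx
    · exact le_max_left _ _
    · exact le_trans (ih hx) (le_max_right _ _)

lemma stackSort_nonempty_eq (w : List ℕ) (hw : w ≠ []) :
    stackSort w = stackSort (w.take (w.idxOf (listMax w))) ++
      stackSort (w.drop (w.idxOf (listMax w) + 1)) ++ [listMax w] := by
  cases w with
  | nil => simp at hw
  | cons x xs => rw [stackSort]

lemma stackSort_perm (w : List ℕ) : stackSort w ~ w := by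
  induction w using stackSort.induct with
  | case1 => simp [stackSort]
  | case2 x xs ih1 ih2 =>
    set w := x :: xs with hw
    have hne : w ≠ [] := by simp [hw]
    have hm : listMax w ∈ w := listMax_mem hne
    have hi : w.idxOf (listMax w) < w.length := List.idxOf_lt_length_iff.mpr hm
    rw [stackSort_nonempty_eq w hne]
    have hget : w[w.idxOf (listMax w)] = listMax w := List.getElem_idxOf hi
    have hsplit : w.take (w.idxOf (listMax w)) ++ listMax w ::
        w.drop (w.idxOf (listMax w) + 1) = w := by
      conv_rhs => rw [← List.take_append_drop (w.idxOf (listMax w)) w]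
      rw [List.drop_eq_getElem_cons hi, hget]
    calc stackSort (w.take (w.idxOf (listMax w))) ++
          stackSort (w.drop (w.idxOf (listMax w) + 1)) ++ [listMax w]
        ~ w.take (w.idxOf (listMax w)) ++ w.drop (w.idxOf (listMax w) + 1)
            ++ [listMax w] := ((ih1.append ih2).append (List.Perm.refl _))
      _ ~ w.take (w.idxOf (listMax w)) ++ ([listMax w] ++
            w.drop (w.idxOf (listMax w) + 1)) := by
          rw [List.append_assoc]
          exact (List.Perm.append_left _ (List.perm_append_comm))
      _ = w := by simpa using hsplit


/-- s(u ++ [m]) = s(u) ++ [m] when m dominates. -/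
lemma stackSort_append_max {u : List ℕ} {m : ℕ} (h : ∀ x ∈ u, x < m) :
    stackSort (u ++ [m]) = stackSort u ++ [m] := by
  have hne : u ++ [m] ≠ [] := by simp
  have hmax : listMax (u ++ [m]) = m := by
    apply le_antisymm
    · have hmem := listMax_mem hne
      rcases List.mem_append.mp hmem with h1 | h1
      · exact le_of_lt (h _ h1)
      · simp at h1; omega
    · exact le_listMax (by simp)
  have hnot : m ∉ u := fun hm => lt_irrefl m (h m hm)
  have hidx : (u ++ [m]).idxOf m = u.length := by
    rw [List.idxOf_append_of_notMem hnot]; simp [List.idxOf_cons_self]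
  rw [stackSort_nonempty_eq _ hne, hmax, hidx]
  rw [List.take_left, List.drop_eq_nil_of_le (by simp)]
  simp [stackSort]

lemma stackSort_iterate_perm (k : ℕ) (w : List ℕ) : stackSort^[k] w ~ w := by
  induction k generalizing w with
  | zero => simp
  | succ k ih =>
    rw [Function.iterate_succ_apply]
    exact (ih _).trans (stackSort_perm w)

lemma stackSort_iterate_append_max {u : List ℕ} {m : ℕ} (h : ∀ x ∈ u, x < m) (k : ℕ) :
    stackSort^[k] (u ++ [m]) = stackSort^[k] u ++ [m] := by
  induction k generalizing u with
  | zero => simp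
  | succ k ih =>
    rw [Function.iterate_succ_apply, Function.iterate_succ_apply,
      stackSort_append_max h, ih]
    intro x hx
    exact h x ((stackSort_perm u).mem_iff.mp hx)

lemma stackSort_sorted_fixed {l : List ℕ} (h : l.Pairwise (· < ·)) :
    stackSort l = l := by
  induction l using List.reverseRecOn with
  | nil => simp [stackSort]
  | append_singleton u m ih =>
    have hlt : ∀ x ∈ u, x < m := by
      intro x hx
      exact (List.pairwise_append.mp h).2.2 x hx m (by simp)
    rw [stackSort_append_max hlt, ih ((List.pairwise_append.mp h).1)]

/-- s of a nonempty word ends with its max. -/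
lemma stackSort_eq_concat_max (w : List ℕ) (hw : w ≠ []) :
    ∃ v, stackSort w = v ++ [listMax w] := by
  rw [stackSort_nonempty_eq w hw]
  exact ⟨_, rfl⟩


lemma listMax_perm {w r : List ℕ} (h : w ~ r) : listMax w = listMax r := by
  rcases eq_or_ne w [] with rfl | hw
  · obtain rfl := List.perm_nil.mp h.symm; rfl
  · have hr : r ≠ [] := fun hr => hw (List.perm_nil.mp (hr ▸ h))
    exact le_antisymm (le_listMax (h.mem_iff.mp (listMax_mem hw)))
      (le_listMax (h.symm.mem_iff.mp (listMax_mem hr)))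

lemma foldr_max_eq (b : ℕ) (l : List ℕ) : l.foldr max b = max (listMax l) b := by
  induction l with
  | nil => simp [listMax]
  | cons a t ih =>
    simp only [List.foldr_cons, ih, listMax]
    omega

lemma listMax_append (l₁ l₂ : List ℕ) :
    listMax (l₁ ++ l₂) = max (listMax l₁) (listMax l₂) := by
  induction l₁ with
  | nil => simp [listMax]
  | cons a t ih =>
    simp only [List.cons_append, listMax, List.foldr_cons] at *
    omega

lemma listMax_concat (l : List ℕ) (a : ℕ) : listMax (l ++ [a]) = max (listMax l) a := by
  rw [listMax_append]; simp [listMax]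

lemma sorted_getLast_eq_listMax {r : List ℕ} (hs : r.Pairwise (· < ·)) (hr : r ≠ []) :
    r.getLast hr = listMax r := by
  refine le_antisymm (le_listMax (List.getLast_mem hr)) ?_
  have := List.dropLast_append_getLast hr
  have hx : ∀ x ∈ r, x ≤ r.getLast hr := by
    intro x hx
    rw [← this] at hx hs
    rcases List.mem_append.mp hx with h1 | h1
    · exact le_of_lt ((List.pairwise_append.mp hs).2.2 x h1 _ (by simp))
    · simp at h1; omega
  exact hx _ (listMax_mem hr)

lemma sorted_headI_min {r : List ℕ} (hs : r.Pairwise (· < ·)) :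
    ∀ x ∈ r, r.headI ≤ x := by
  cases r with
  | nil => simp
  | cons a t =>
    intro x hx
    rcases List.mem_cons.mp hx with rfl | hx
    · simp
    · exact le_of_lt (by simpa using (List.pairwise_cons.mp hs).1 x hx)


lemma singleton_of_all_eq {R : List ℕ} (hR : R ≠ []) (hnd : R.Nodup)
    (h : ∀ x ∈ R, x = a) : R = [a] := by
  cases R with
  | nil => simp at hR
  | cons x t =>
    have hx : x = a := h x (by simp)
    cases t with
    | nil => rw [hx]
    | cons y t' =>
      have hy : y = a := h y (by simp)
      exfalso
      exact (List.nodup_cons.mp hnd).1 (by simp [hx, hy])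

lemma decomp (w r : List ℕ) (hperm : w ~ r) (hsort : r.Pairwise (· < ·)) (hw : w ≠ []) :
    ∃ u : List ℕ,
      stackSort w = u ++ [listMax w] ∧
      u.length + 1 = w.length ∧
      u ~ r.dropLast ∧
      (∀ x ∈ u, x < listMax w) ∧
      r = r.dropLast ++ [listMax w] ∧
      (3 ≤ w.length →
        ((∃ τ, u = τ ++ [listMax u, r.headI]) ↔ ∃ σ, w = σ ++ [listMax w, r.headI])) := by
  have hndr : r.Nodup := hsort.nodup
  have hnd : w.Nodup := (hperm.nodup_iff).mpr hndr
  set m := listMax w with hm_def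
  set i := w.idxOf m with hi_def
  set L := w.take i with hL_def
  set R := w.drop (i + 1) with hR_def
  have hm : m ∈ w := listMax_mem hw
  have hi : i < w.length := List.idxOf_lt_length_iff.mpr hm
  have hget : w[i] = m := List.getElem_idxOf hi
  have hsplit : L ++ m :: R = w := by
    conv_rhs => rw [← List.take_append_drop i w]
    rw [List.drop_eq_getElem_cons hi, hget]
  have hndLR : (L ++ m :: R).Nodup := hsplit ▸ hnd
  have hmL : m ∉ L := by
    have := (List.nodup_append.mp hndLR).2.2
    intro hmem; exact this m hmem m (by simp) rfl
  have hmR : m ∉ R := by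
    have := (List.nodup_append.mp hndLR).2.1
    exact (List.nodup_cons.mp this).1
  have hLR_lt : ∀ x ∈ L ++ R, x < m := by
    intro x hx
    have hxw : x ∈ w := by
      rw [← hsplit]
      rcases List.mem_append.mp hx with h1 | h1
      · exact List.mem_append.mpr (Or.inl h1)
      · exact List.mem_append.mpr (Or.inr (List.mem_cons_of_mem _ h1))
    have hle : x ≤ m := le_listMax hxw
    rcases lt_or_eq_of_le hle with h1 | rfl
    · exact h1
    · exfalso
      rcases List.mem_append.mp hx with h1 | h1
      · exact hmL h1
      · exact hmR h1
  have hr : r ≠ [] := fun h => hw (List.perm_nil.mp (h ▸ hperm))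
  have hreq : r = r.dropLast ++ [m] := by
    conv_lhs => rw [← List.dropLast_append_getLast hr]
    rw [sorted_getLast_eq_listMax hsort hr, ← listMax_perm hperm]
  refine ⟨stackSort L ++ stackSort R, ?_, ?_, ?_, ?_, ?_, ?_⟩
  · rw [stackSort_nonempty_eq w hw, ← hm_def, ← hi_def, ← hL_def, ← hR_def,
      List.append_assoc]
  · have := congrArg List.length hsplit
    simp only [List.length_append, List.length_cons] at this
    simp [List.length_append, (stackSort_perm L).length_eq, (stackSort_perm R).length_eq]
    omega
  · -- u ~ r.dropLast
    have h1 : stackSort L ++ stackSort R ~ L ++ R :=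
      (stackSort_perm L).append (stackSort_perm R)
    refine h1.trans ?_
    have h2 : m :: (L ++ R) ~ m :: r.dropLast := by
      refine (List.perm_middle.symm.trans (hsplit ▸ hperm : L ++ m :: R ~ r)).trans ?_
      conv_lhs => rw [hreq]
      exact List.perm_middle.trans (by simp)
    exact (List.perm_cons m).mp h2
  · -- all < m
    intro x hx
    refine hLR_lt x ?_
    rcases List.mem_append.mp hx with h1 | h1
    · exact List.mem_append.mpr (Or.inl ((stackSort_perm L).subset h1))
    · exact List.mem_append.mpr (Or.inr ((stackSort_perm R).subset h1))
  · exact hreq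
  · -- the structural iff
    intro h3
    set a := r.headI with ha_def
    have ha_min : ∀ x ∈ w, a ≤ x := fun x hx => sorted_headI_min hsort x (hperm.subset hx)
    have hlensplit : w.length = L.length + 1 + R.length := by
      have := congrArg List.length hsplit
      simp only [List.length_append, List.length_cons] at this
      omega
    constructor
    · rintro ⟨τ, hτ⟩
      rcases eq_or_ne R [] with hR0 | hR0
      · -- contradiction: u = stackSort L ends with max of L which is also a
        exfalso
        have hL2 : 2 ≤ L.length := by
          rw [hR0] at hlensplit; simp at hlensplit; omega
        have hLne : L ≠ [] := by intro h; rw [h] at hL2; simp at hL2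
        obtain ⟨v, hv⟩ := stackSort_eq_concat_max L hLne
        have hu : stackSort L ++ stackSort R = stackSort L := by
          rw [hR0]; simp [stackSort]
        have hlast : listMax L = a := by
          have e1 : (stackSort L ++ stackSort R).getLast? = some (listMax L) := by
            rw [hu, hv]; simp
          have e2 : (stackSort L ++ stackSort R).getLast? = some a := by
            rw [hτ]
            have : τ ++ [listMax (stackSort L ++ stackSort R), a]
                = (τ ++ [listMax (stackSort L ++ stackSort R)]) ++ [a] := by simp
            rw [this]; simp
          rw [e1] at e2; exact Option.some_injective _ e2
        have hall : ∀ x ∈ L, x = a := by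
          intro x hx
          have h1 : x ≤ a := hlast ▸ le_listMax hx
          have h2 : a ≤ x := ha_min x (by rw [← hsplit]; exact List.mem_append.mpr (Or.inl hx))
          omega
        have hndL : L.Nodup := (List.nodup_append.mp hndLR).1
        have : L = [a] := singleton_of_all_eq hLne hndL hall
        rw [this] at hL2
        simp at hL2
      · -- R nonempty: R = [a], so w = L ++ [m, a]
        obtain ⟨v, hv⟩ := stackSort_eq_concat_max R hR0
        have hlast : listMax R = a := by
          have e1 : (stackSort L ++ stackSort R).getLast? = some (listMax R) := by
            rw [hv, ← List.append_assoc]; simp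
          have e2 : (stackSort L ++ stackSort R).getLast? = some a := by
            rw [hτ]
            have : τ ++ [listMax (stackSort L ++ stackSort R), a]
                = (τ ++ [listMax (stackSort L ++ stackSort R)]) ++ [a] := by simp
            rw [this]; simp
          rw [e1] at e2; exact Option.some_injective _ e2
        have hall : ∀ x ∈ R, x = a := by
          intro x hx
          have h1 : x ≤ a := hlast ▸ le_listMax hx
          have h2 : a ≤ x := ha_min x
            (by rw [← hsplit]; exact List.mem_append.mpr (Or.inr (List.mem_cons_of_mem _ hx)))
          omega
        have hndR : R.Nodup :=
          (List.nodup_cons.mp (List.nodup_append.mp hndLR).2.1).2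
        have hRa : R = [a] := singleton_of_all_eq hR0 hndR hall
        exact ⟨L, by rw [← hsplit, hRa]⟩
    · rintro ⟨σ, hσ⟩
      -- then L = σ, R = [a]
      have hma : m ≠ a := by
        have : (σ ++ [m, a]).Nodup := hσ ▸ hnd
        have := (List.nodup_append.mp this).2.1
        simp at this; exact this
      have hmσ : m ∉ σ := by
        have : (σ ++ [m, a]).Nodup := hσ ▸ hnd
        intro hmem
        exact (List.nodup_append.mp this).2.2 m hmem m (by simp) rfl
      have hiσ : i = σ.length := by
        rw [hi_def, hσ, List.idxOf_append_of_notMem hmσ]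
        simp [List.idxOf_cons_self]
      have hLσ : L = σ := by
        rw [hL_def, hσ, hiσ, List.take_left]
      have hRa : R = [a] := by
        rw [hR_def, hσ, hiσ, ← List.drop_drop, List.drop_left]
        rfl
      have hσne : σ ≠ [] := by
        intro h0
        rw [hσ, h0] at h3; simp at h3
      obtain ⟨v, hv⟩ := stackSort_eq_concat_max σ hσne
      have hsa : stackSort R = [a] := by
        rw [hRa]; exact stackSort_sorted_fixed (by simp)
      have haσ : a ≤ listMax σ := by
        refine le_trans (ha_min (listMax σ) ?_) le_rfl
        rw [hσ]
        exact List.mem_append.mpr (Or.inl (listMax_mem hσne))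
      have hmaxu : listMax (stackSort L ++ stackSort R) = listMax σ := by
        rw [hLσ, hsa, listMax_perm ((stackSort_perm σ).append (List.Perm.refl [a])),
          listMax_concat]
        omega
      refine ⟨v, ?_⟩
      rw [hmaxu, hLσ, hsa, hv]
      simp


lemma iterate_sorts : ∀ (n : ℕ) (w r : List ℕ), w.length = n → w ~ r →
    r.Pairwise (· < ·) → stackSort^[n - 1] w = r := by
  intro n
  induction n using Nat.strong_induction_on with
  | _ n ih =>
    intro w r hlen hperm hsort
    match n, hlen with
    | 0, hlen =>
      have hw : w = [] := List.length_eq_zero_iff.mp hlen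
      have hr : r = [] := List.perm_nil.mp (hw ▸ hperm).symm
      simp [hw, hr]
    | 1, hlen =>
      obtain ⟨x, hx⟩ := List.length_eq_one_iff.mp hlen
      have hr : r = [x] := List.perm_singleton.mp (hx ▸ hperm).symm
      simp [hx, hr]
    | (k + 2), hlen =>
      have hw : w ≠ [] := by intro h; rw [h] at hlen; simp at hlen
      obtain ⟨u, hsw, hulen, huperm, hult, hreq, -⟩ := decomp w r hperm hsort hw
      have hklen : u.length = k + 1 := by omega
      have ihm : stackSort^[k + 1 - 1] u = r.dropLast :=
        ih (k + 1) (by omega) u r.dropLast hklen huperm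
          (List.Pairwise.sublist (List.dropLast_sublist r) hsort)
      have : stackSort^[k + 2 - 1] w = stackSort^[k] (stackSort w) := by
        rw [show k + 2 - 1 = k + 1 from rfl, Function.iterate_succ_apply]
      rw [this, hsw, stackSort_iterate_append_max hult k]
      simp only [Nat.add_sub_cancel] at ihm
      rw [ihm, ← hreq]


/-- Swap the first two letters. -/
def swap2 : List ℕ → List ℕ
  | a :: b :: t => b :: a :: t
  | l => l

lemma swap2_append {l : List ℕ} (h : 2 ≤ l.length) (t : List ℕ) :
    swap2 (l ++ t) = swap2 l ++ t := by
  match l with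
  | a :: b :: s => rfl
  | [] => simp at h
  | [a] => simp at h

lemma swap2_ne {a b : ℕ} (h : a ≠ b) (t : List ℕ) : swap2 (a :: b :: t) ≠ a :: b :: t := by
  simp [swap2]
  intro h1 _; exact h h1.symm

lemma headI_dropLast {l : List ℕ} (h : 2 ≤ l.length) : l.dropLast.headI = l.headI := by
  match l with
  | a :: b :: t => rfl
  | [] => simp at h
  | [a] => simp at h

lemma pair_perm {w : List ℕ} {p q : ℕ} (h : w ~ [p, q]) (hpq : p ≠ q) :
    w = [p, q] ∨ w = [q, p] := by
  have hlen : w.length = 2 := by simpa using h.length_eq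
  match w, hlen with
  | [x, y], _ =>
    have hx : x ∈ [p, q] := h.subset (by simp)
    have hy : y ∈ [p, q] := h.subset (by simp)
    have hnd : ([x, y] : List ℕ).Nodup := h.nodup_iff.mpr (by simp [hpq])
    have hxy : x ≠ y := by simpa using (List.nodup_cons.mp hnd).1
    simp only [List.mem_cons, List.mem_singleton, List.not_mem_nil, or_false] at hx hy
    rcases hx with rfl | rfl <;> rcases hy with rfl | rfl <;> simp_all

lemma key : ∀ (n : ℕ) (w r : List ℕ), w.length = n → 2 ≤ n → w ~ r →
    r.Pairwise (· < ·) →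
    (stackSort^[n - 2] w = r ∨ stackSort^[n - 2] w = swap2 r) ∧
      (stackSort^[n - 2] w = swap2 r ↔ ∃ σ, w = σ ++ [listMax w, r.headI]) := by
  intro n
  induction n using Nat.strong_induction_on with
  | _ n ih =>
    intro w r hlen hn2 hperm hsort
    match n, hn2 with
    | 2, _ =>
      -- base case
      have hrlen : r.length = 2 := by rw [← hperm.length_eq, hlen]
      match r, hrlen with
      | [p, q], _ =>
        have hpq : p < q := by
          have := List.pairwise_cons.mp hsort
          exact this.1 q (by simp)
        have hwm : listMax w = q := by
          rw [listMax_perm hperm]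
          have : listMax [p, q] = max p (max q 0) := rfl
          rw [this]; omega
        rcases pair_perm hperm (by omega) with rfl | rfl
        · constructor
          · left; rfl
          · simp only [show (2:ℕ) - 2 = 0 from rfl, Function.iterate_zero, id_eq]
            constructor
            · intro h
              exfalso
              exact swap2_ne (by omega : p ≠ q) [] (by rw [← h])
            · rintro ⟨σ, hσ⟩
              exfalso
              have hσ0 : σ = [] := by
                have := congrArg List.length hσ
                simp at this
                exact this
              rw [hσ0, hwm] at hσ
              simp at hσ
              omega
        · constructor
          · right; rfl
          · simp only [show (2:ℕ) - 2 = 0 from rfl, Function.iterate_zero, id_eq]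
            constructor
            · intro _
              exact ⟨[], by simp [hwm, swap2]⟩
            · intro _; rfl
    | (k + 3), _ =>
      have hw : w ≠ [] := by intro h; rw [h] at hlen; simp at hlen
      obtain ⟨u, hsw, hulen, huperm, hult, hreq, hiff⟩ := decomp w r hperm hsort hw
      have h3 : 3 ≤ w.length := by omega
      have hiff := hiff h3
      have hulen' : u.length = k + 2 := by omega
      have hsort' : r.dropLast.Pairwise (· < ·) :=
        List.Pairwise.sublist (List.dropLast_sublist r) hsort
      obtain ⟨ihor, ihiff⟩ := ih (k + 2) (by omega) u r.dropLast hulen' (by omega)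
        huperm hsort'
      have hdl2 : 2 ≤ r.dropLast.length := by
        rw [← huperm.length_eq, hulen']; omega
      have hhead : r.dropLast.headI = r.headI :=
        headI_dropLast (by rw [← hperm.length_eq, hlen]; omega)
      have hit' : stackSort^[k + 3 - 2] w = stackSort^[k + 2 - 2] u ++ [listMax w] := by
        rw [show k + 3 - 2 = k + 1 from rfl, show k + 2 - 2 = k from rfl,
          Function.iterate_succ_apply, hsw, stackSort_iterate_append_max hult k]
      have hswap : swap2 r = swap2 r.dropLast ++ [listMax w] := by
        conv_lhs => rw [hreq]
        exact swap2_append hdl2 _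
      constructor
      · rcases ihor with h1 | h1
        · left; rw [hit', h1, ← hreq]
        · right; rw [hit', h1, ← hswap]
      · rw [hit', hswap]
        constructor
        · intro h
          have h2 := ihiff.mp (List.append_left_injective [listMax w] h)
          rw [hhead] at h2
          exact hiff.mp h2
        · intro h
          have h2 := hiff.mpr h
          rw [← hhead] at h2
          rw [ihiff.mpr h2]


lemma range'_sorted (s n : ℕ) : (List.range' s n).Pairwise (· < ·) :=
  List.pairwise_lt_range' (s := s) (n := n)

lemma range'_split (n : ℕ) (hn : 2 ≤ n) :
    List.range' 1 n = (1 :: List.range' 2 (n - 2)) ++ [n] := by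
  have h1 : n = (n - 1) + 1 := by omega
  have h2 : n - 1 = (n - 2) + 1 := by omega
  conv_lhs => rw [h1, List.range'_concat, h2, List.range'_succ]
  simp
  omega

/-- Characterization: `ssc π = n - 1` iff `π = σ ++ [n, 1]`. -/
lemma char (n : ℕ) (hn : 2 ≤ n) (π : List ℕ) (hperm : π ~ List.range' 1 n) :
    ssc π = n - 1 ↔ ∃ σ, π = σ ++ [n, 1] := by
  set r := List.range' 1 n with hr_def
  have hsort : r.Pairwise (· < ·) := range'_sorted 1 n
  have hlen : π.length = n := by rw [hperm.length_eq, hr_def, List.length_range']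
  have hsplitr : r = (1 :: List.range' 2 (n - 2)) ++ [n] := range'_split n hn
  have hrne : r ≠ [] := by rw [hsplitr]; simp
  have hmaxπ : listMax π = n := by
    have h2 : r.getLast? = some (listMax r) := by
      rw [List.getLast?_eq_getLast hrne, sorted_getLast_eq_listMax hsort hrne]
    have h3 : r.getLast? = some n := by
      conv_lhs => rw [hsplitr]
      exact List.getLast?_concat
    rw [h2] at h3
    rw [listMax_perm hperm]
    exact Option.some_injective _ h3
  have hheadr : r.headI = 1 := by rw [hsplitr]; rfl
  obtain ⟨hor, hiff⟩ := key n π r hlen hn hperm hsort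
  have hiff' : stackSort^[n - 2] π = swap2 r ↔ ∃ σ, π = σ ++ [n, 1] := by
    rw [hiff, hmaxπ, hheadr]
  have hfix : ∀ j, stackSort^[j] r = r :=
    fun j => Function.iterate_fixed (stackSort_sorted_fixed hsort) j
  have hsorts : stackSort^[n - 1] π = r := iterate_sorts n π r hlen hperm hsort
  have hswap_ne : swap2 r ≠ r := by
    rcases Nat.lt_or_ge n 3 with h3 | h3
    · -- n = 2 : r = [1, 2]
      have hn2 : n = 2 := by omega
      subst hn2
      rw [hsplitr]
      simp [swap2]
    · -- n ≥ 3 : range' 2 (n-2) = 2 :: range' 3 (n - 3)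
      have : List.range' 2 (n - 2) = 2 :: List.range' 3 (n - 3) := by
        rw [show n - 2 = (n - 3) + 1 by omega, List.range'_succ]
      rw [hsplitr, this]
      exact swap2_ne (by omega) _
  have hS : {k : ℕ | stackSort^[k] π = List.range' 1 π.length}
      = {k : ℕ | stackSort^[k] π = r} := by rw [hlen]
  have hssc : ssc π = sInf {k : ℕ | stackSort^[k] π = r} := by rw [ssc, hS]
  constructor
  · intro h
    rcases hor with h1 | h1
    · exfalso
      -- ssc ≤ n - 2 contradiction
      have hmem : (n - 2) ∈ {k : ℕ | stackSort^[k] π = r} := h1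
      have hle : ssc π ≤ n - 2 := hssc ▸ Nat.sInf_le hmem
      omega
    · exact hiff'.mp h1
  · intro h
    have h1 : stackSort^[n - 2] π = swap2 r := hiff'.mpr h
    rw [hssc]
    refine le_antisymm (Nat.sInf_le hsorts) (le_csInf ⟨n - 1, hsorts⟩ ?_)
    intro k hk
    by_contra hlt
    push_neg at hlt
    have hk2 : k ≤ n - 2 := by omega
    have : stackSort^[n - 2] π = r := by
      rw [show n - 2 = (n - 2 - k) + k by omega, Function.iterate_add_apply,
        hk, hfix]
    rw [this] at h1
    exact hswap_ne h1.symm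


lemma equivPerm (n : ℕ) (hn : 2 ≤ n) (σ : List ℕ) :
    σ ++ [n, 1] ~ List.range' 1 n ↔ σ ~ List.range' 2 (n - 2) := by
  have h1 : σ ++ [n, 1] ~ 1 :: (σ ++ [n]) := by
    have := List.perm_middle (a := 1) (l₁ := σ ++ [n]) (l₂ := ([] : List ℕ))
    simpa using this
  have h2 : List.range' 1 n = 1 :: (List.range' 2 (n - 2) ++ [n]) := by
    rw [range'_split n hn]; rfl
  rw [h2]
  constructor
  · intro h
    have h3 : (1 : ℕ) :: (σ ++ [n]) ~ 1 :: (List.range' 2 (n - 2) ++ [n]) :=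
      h1.symm.trans h
    exact (List.perm_append_right_iff [n]).mp ((List.perm_cons 1).mp h3)
  · intro h
    refine h1.trans ?_
    exact (List.perm_cons 1).mpr ((List.perm_append_right_iff [n]).mpr h)

end SSCProof


/-- For all `n ≥ 2`, the number of permutations `π` of `{1,…,n}` with
`ssc(π) = n−1` equals `(n−2)!`. -/
theorem card_ssc_eq_n_sub_one (n : ℕ) (hn : 2 ≤ n) :
    {π : List ℕ | IsPermWord n π ∧ ssc π = n - 1}.ncard = (n - 2).factorial := by
  classical
  have hset : {π : List ℕ | IsPermWord n π ∧ ssc π = n - 1}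
      = (fun σ : List ℕ => σ ++ [n, 1]) ''
        {σ : List ℕ | σ.Perm (List.range' 2 (n - 2))} := by
    ext π
    simp only [Set.mem_setOf_eq, Set.mem_image]
    constructor
    · rintro ⟨hp, hs⟩
      obtain ⟨σ, rfl⟩ := (SSCProof.char n hn π hp).mp hs
      exact ⟨σ, (SSCProof.equivPerm n hn σ).mp hp, rfl⟩
    · rintro ⟨σ, hσ, rfl⟩
      have hp : IsPermWord n (σ ++ [n, 1]) := (SSCProof.equivPerm n hn σ).mpr hσ
      exact ⟨hp, (SSCProof.char n hn _ hp).mpr ⟨σ, rfl⟩⟩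
  have hinj : Function.Injective (fun σ : List ℕ => σ ++ [n, 1]) :=
    List.append_left_injective _
  rw [hset, Set.ncard_image_of_injective _ hinj]
  have hfin : {σ : List ℕ | σ.Perm (List.range' 2 (n - 2))}
      = ↑(List.range' 2 (n - 2)).permutations.toFinset := by
    ext σ
    simp [List.mem_permutations]
  rw [hfin, Set.ncard_coe_finset,
    List.toFinset_card_of_nodup (List.nodup_permutations _ (List.nodup_range' _ _)),
    List.length_permutations, List.length_range']
  exact Nat.one_pos
end
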